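/- Combined error bound (Theorem 1, abstract form): let ‖·‖_σ be the scaled ℓ₂ norm on ℝⁿ, Π an orthogonal projection, T a γ-contraction (γ ∈ [0,1)) under ‖·‖_σ, Q ∈ ℝⁿ, and Q̂_s the unique fixed point of Π∘T̂ for an approximate operator T̂ which is also a γ-contraction. Suppose (i) ‖ΠT̂Q − ΠQ‖_σ ≤ e_t, and (ii) ‖T̂Q̂ − TQ̂‖_∞ ≤ e_o componentwise for the relevant vector, so that ‖Q̂_s − Q̂‖_σ ≤ ‖Π(T̂ − T)(·)‖_σ ≤ e_o′ where Q̂ = ΠTΦθ*. Then ‖Q − Q̂‖_σ ≤ (1/√(1−γ²))‖Q − ΠQ‖_σ + e_t/(1−γ) + e_o′. -/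

import Mathlib

open scoped InnerProductSpace

/-- σ-norm on ℝⁿ: ‖y‖_σ = √((1/n)‖y‖₂²). -/
noncomputable def sigmaNorm (n : ℕ) (y : EuclideanSpace ℝ (Fin n)) : ℝ :=
  Real.sqrt ((1 / (n : ℝ)) * ‖y‖ ^ 2)

lemma sigmaNorm_eq (n : ℕ) (y : EuclideanSpace ℝ (Fin n)) :
    sigmaNorm n y = Real.sqrt (1 / (n : ℝ)) * ‖y‖ := by
  unfold sigmaNorm
  rw [Real.sqrt_mul (by positivity), Real.sqrt_sq (norm_nonneg _)]

lemma sigmaNorm_nonneg (n : ℕ) (y : EuclideanSpace ℝ (Fin n)) : 0 ≤ sigmaNorm n y :=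
  Real.sqrt_nonneg _

lemma alg_lemma (γ s d e r : ℝ) (hγ0 : 0 ≤ γ) (hγ1 : γ < 1) (hs : 0 ≤ s) (hd : 0 ≤ d)
    (he : 0 ≤ e) (hr : r = Real.sqrt (1 - γ ^ 2))
    (hq : s ^ 2 ≤ d ^ 2 + (e + γ * s) ^ 2) : s ≤ d / r + e / (1 - γ) := by
  have hγ2 : 0 < 1 - γ ^ 2 := by nlinarith
  have hu : 0 < 1 - γ := by linarith
  have hr0 : 0 < r := hr ▸ Real.sqrt_pos.2 hγ2
  have hr2 : r ^ 2 = 1 - γ ^ 2 := hr ▸ Real.sq_sqrt (le_of_lt hγ2)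
  set u := 1 - γ with hu'
  have key : u * r * s ≤ u * d + r * e := by
    by_contra hcon
    push_neg at hcon
    have hA : 0 < u * r * s - u * d - r * e := by linarith
    have hf : (1 - γ ^ 2) * s ^ 2 - 2 * γ * e * s - e ^ 2 - d ^ 2 ≤ 0 := by nlinarith [hq]
    have h5 : r ^ 2 - γ * u = u := by rw [hu']; nlinarith [hr2]
    have h6 : 0 ≤ e * r * (r ^ 2 - γ * u) := by rw [h5]; positivity
    have hF : 0 < r ^ 2 * (u * r * s + r * e + u * d) - 2 * γ * e * u * r := by
      nlinarith [mul_pos (mul_pos hr0 hr0) hA, h6,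
        mul_nonneg (mul_nonneg hd hu.le) (sq_nonneg r)]
    have hid : r ^ 2 * u ^ 2 * ((1 - γ ^ 2) * s ^ 2 - 2 * γ * e * s - e ^ 2 - d ^ 2)
        = (u * r * s - u * d - r * e)
            * (r ^ 2 * (u * r * s + r * e + u * d) - 2 * γ * e * u * r)
          + 2 * e * d * r * u ^ 2 := by
      have huu : u = 1 - γ := rfl
      rw [huu]
      linear_combination (-(r ^ 2 * (s ^ 2 - 2 * γ * s ^ 2 + γ ^ 2 * s ^ 2 - e ^ 2)
        - 2 * d * e * r + 2 * γ * d * e * r)) * hr2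
    nlinarith [mul_pos hA hF, mul_nonneg (mul_nonneg (mul_nonneg (by linarith : (0:ℝ) ≤ 2 * e) hd) hr0.le) (sq_nonneg u),
      mul_nonneg (mul_nonneg (sq_nonneg r) (sq_nonneg u)) (neg_nonneg.2 hf)]
  have h1 : s ≤ (u * d + r * e) / (u * r) := by
    rw [le_div_iff₀ (by positivity)]
    nlinarith
  have h2 : (u * d + r * e) / (u * r) = d / r + e / u := by
    field_simp
  rw [h2] at h1
  exact h1

/-- Combined error bound (Theorem 1, abstract form): with Π an orthogonal projection,
T and T̂ γ-contractions in ‖·‖_σ, Q̂_s the fixed point of Π∘T̂, and the error bounds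
‖ΠT̂Q − ΠQ‖_σ ≤ e_t and ‖Q̂_s − Q̂‖_σ ≤ e_o′, we get
‖Q − Q̂‖_σ ≤ ‖Q − ΠQ‖_σ/√(1−γ²) + e_t/(1−γ) + e_o′. -/
theorem stmt19 (n : ℕ) (γ et eo' : ℝ) (hγ0 : 0 ≤ γ) (hγ1 : γ < 1)
    (het : 0 ≤ et) (heo : 0 ≤ eo')
    (Pi : EuclideanSpace ℝ (Fin n) →ₗ[ℝ] EuclideanSpace ℝ (Fin n))
    (hidem : ∀ y, Pi (Pi y) = Pi y)
    (horth : ∀ y z, ⟪y - Pi y, Pi z⟫_ℝ = 0)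
    (T That : EuclideanSpace ℝ (Fin n) → EuclideanSpace ℝ (Fin n))
    (hT : ∀ Q₁ Q₂, sigmaNorm n (T Q₁ - T Q₂) ≤ γ * sigmaNorm n (Q₁ - Q₂))
    (hThat : ∀ Q₁ Q₂, sigmaNorm n (That Q₁ - That Q₂) ≤ γ * sigmaNorm n (Q₁ - Q₂))
    (Qs Qhat Q : EuclideanSpace ℝ (Fin n))
    (hfix : Pi (That Qs) = Qs)
    (h_et : sigmaNorm n (Pi (That Q) - Pi Q) ≤ et)
    (h_eo : sigmaNorm n (Qs - Qhat) ≤ eo') :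
    sigmaNorm n (Q - Qhat) ≤
      sigmaNorm n (Q - Pi Q) / Real.sqrt (1 - γ ^ 2) + et / (1 - γ) + eo' := by
  set c : ℝ := Real.sqrt (1 / (n : ℝ)) with hc
  have hc0 : 0 ≤ c := Real.sqrt_nonneg _
  have hσ : ∀ y, sigmaNorm n y = c * ‖y‖ := fun y => sigmaNorm_eq n y
  -- triangle inequality for sigmaNorm
  have htri : ∀ x y : EuclideanSpace ℝ (Fin n),
      sigmaNorm n (x + y) ≤ sigmaNorm n x + sigmaNorm n y := by
    intro x y
    rw [hσ, hσ, hσ, ← mul_add]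
    exact mul_le_mul_of_nonneg_left (norm_add_le x y) hc0
  -- Pi is nonexpansive
  have hpyth : ∀ y : EuclideanSpace ℝ (Fin n), ‖y‖ ^ 2 = ‖y - Pi y‖ ^ 2 + ‖Pi y‖ ^ 2 := by
    intro y
    have hy : y = (y - Pi y) + Pi y := by abel
    calc ‖y‖ ^ 2 = ‖(y - Pi y) + Pi y‖ ^ 2 := by rw [← hy]
      _ = ‖y - Pi y‖ ^ 2 + 2 * ⟪y - Pi y, Pi y⟫_ℝ + ‖Pi y‖ ^ 2 := by
          rw [@norm_add_sq_real]
      _ = ‖y - Pi y‖ ^ 2 + ‖Pi y‖ ^ 2 := by rw [horth y y]; ring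
  have hnonexp : ∀ y : EuclideanSpace ℝ (Fin n), sigmaNorm n (Pi y) ≤ sigmaNorm n y := by
    intro y
    rw [hσ, hσ]
    have h := hpyth y
    have : ‖Pi y‖ ≤ ‖y‖ := by nlinarith [norm_nonneg (Pi y), norm_nonneg y, sq_nonneg (‖y - Pi y‖)]
    exact mul_le_mul_of_nonneg_left this hc0
  -- Pythagoras for Q - Qs
  have hPiQs : Pi Q - Qs = Pi (Q - That Qs) := by
    rw [map_sub, hfix]
  have hpy : sigmaNorm n (Q - Qs) ^ 2
      = sigmaNorm n (Q - Pi Q) ^ 2 + sigmaNorm n (Pi Q - Qs) ^ 2 := by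
    have hdecomp : Q - Qs = (Q - Pi Q) + (Pi Q - Qs) := by abel
    have hinner : ⟪Q - Pi Q, Pi Q - Qs⟫_ℝ = 0 := by
      rw [hPiQs]; exact horth Q (Q - That Qs)
    have hnorm : ‖Q - Qs‖ ^ 2 = ‖Q - Pi Q‖ ^ 2 + ‖Pi Q - Qs‖ ^ 2 := by
      calc ‖Q - Qs‖ ^ 2 = ‖(Q - Pi Q) + (Pi Q - Qs)‖ ^ 2 := by rw [← hdecomp]
        _ = ‖Q - Pi Q‖ ^ 2 + 2 * ⟪Q - Pi Q, Pi Q - Qs⟫_ℝ + ‖Pi Q - Qs‖ ^ 2 := by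
            rw [@norm_add_sq_real]
        _ = _ := by rw [hinner]; ring
    rw [hσ, hσ, hσ, mul_pow, mul_pow, mul_pow, hnorm]
    ring
  -- contraction bound on Pi Q - Qs
  have hb : sigmaNorm n (Pi Q - Qs) ≤ et + γ * sigmaNorm n (Q - Qs) := by
    have hsplit : Pi Q - Qs = (Pi Q - Pi (That Q)) + (Pi (That Q) - Qs) := by abel
    have h1 : sigmaNorm n (Pi Q - Pi (That Q)) ≤ et := by
      have : Pi Q - Pi (That Q) = -(Pi (That Q) - Pi Q) := by abel
      rw [this, hσ, norm_neg, ← hσ]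
      exact h_et
    have h2 : sigmaNorm n (Pi (That Q) - Qs) ≤ γ * sigmaNorm n (Q - Qs) := by
      have heq : Pi (That Q) - Qs = Pi (That Q - That Qs) := by rw [map_sub, hfix]
      rw [heq]
      exact le_trans (hnonexp _) (hThat Q Qs)
    calc sigmaNorm n (Pi Q - Qs) ≤ sigmaNorm n (Pi Q - Pi (That Q)) + sigmaNorm n (Pi (That Q) - Qs) := by
          rw [hsplit] at *; exact htri _ _
      _ ≤ et + γ * sigmaNorm n (Q - Qs) := add_le_add h1 h2
  -- quadratic inequality
  have hq : sigmaNorm n (Q - Qs) ^ 2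
      ≤ sigmaNorm n (Q - Pi Q) ^ 2 + (et + γ * sigmaNorm n (Q - Qs)) ^ 2 := by
    have hb0 : 0 ≤ sigmaNorm n (Pi Q - Qs) := sigmaNorm_nonneg _ _
    nlinarith [hpy, hb]
  have hmain : sigmaNorm n (Q - Qs)
      ≤ sigmaNorm n (Q - Pi Q) / Real.sqrt (1 - γ ^ 2) + et / (1 - γ) :=
    alg_lemma γ _ _ _ _ hγ0 hγ1 (sigmaNorm_nonneg _ _) (sigmaNorm_nonneg _ _) het rfl hq
  have hfin : sigmaNorm n (Q - Qhat) ≤ sigmaNorm n (Q - Qs) + sigmaNorm n (Qs - Qhat) := by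
    have : Q - Qhat = (Q - Qs) + (Qs - Qhat) := by abel
    rw [this]; exact htri _ _
  linarith
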